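/- Let V ∈ R^{K×R} have full column rank R and let p be the row index set selected so that |det V(p,:)| is maximal over all R-subsets of rows (the MaxVol choice). Then V(p,:) is invertible and every entry of the interpolation matrix T = V · V(p,:)⁻¹ has absolute value at most 1. -/

import Mathlib

open Matrix

theorem stmt_5 (K R : ℕ) (V : Matrix (Fin K) (Fin R) ℝ)
    (hrank : V.rank = R)
    (p : Fin R → Fin K) (hp : Function.Injective p)
    (hmax : ∀ q : Fin R → Fin K, Function.Injective q →
      |(V.submatrix q id).det| ≤ |(V.submatrix p id).det|) :
    IsUnit (V.submatrix p id).det ∧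
    ∀ i j, |(V * (V.submatrix p id)⁻¹) i j| ≤ 1 := by
  classical
  set A : Matrix (Fin R) (Fin R) ℝ := V.submatrix p id with hA
  -- Step 1: there exists an injective q with invertible submatrix
  have h1 : ∃ q : Fin R → Fin K, Function.Injective q ∧ IsUnit (V.submatrix q id).det := by
    have hspan : Submodule.span ℝ (Set.range (fun i => V i)) = ⊤ := by
      apply Submodule.eq_top_of_finrank_eq
      have h := V.rank_eq_finrank_span_row
      rw [hrank] at h
      show Module.finrank ℝ (Submodule.span ℝ (Set.range V.row)) = _
      rw [← h]
      simp [Module.finrank_pi]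
    obtain ⟨b, hbsub, hbspan, hbli⟩ := exists_linearIndependent ℝ (Set.range (fun i => V i))
    rw [hspan] at hbspan
    have hbfin : b.Finite := hbli.setFinite
    haveI : Fintype b := hbfin.fintype
    let B : Module.Basis b ℝ (Fin R → ℝ) := Module.Basis.mk hbli (by rw [Subtype.range_coe, hbspan])
    have hcard : Fintype.card b = R := by
      have := Module.finrank_eq_card_basis B
      simpa [Module.finrank_pi] using this.symm
    let e : Fin R ≃ b := (Fintype.equivFinOfCardEq hcard).symm
    have hchoose : ∀ j : Fin R, ∃ k : Fin K, V k = (e j : Fin R → ℝ) := by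
      intro j
      have : (e j : Fin R → ℝ) ∈ Set.range (fun i => V i) := hbsub (e j).2
      exact this
    choose q hq using hchoose
    have hVq : (fun j => V (q j)) = fun j => (e j : Fin R → ℝ) := funext hq
    have hqinj : Function.Injective q := by
      intro a c hac
      have : (e a : Fin R → ℝ) = (e c : Fin R → ℝ) := by rw [← hq a, ← hq c, hac]
      exact e.injective (Subtype.coe_injective this)
    refine ⟨q, hqinj, ?_⟩
    have hli : LinearIndependent ℝ (fun j => (V.submatrix q id) j) := by
      have : (fun j => (V.submatrix q id) j) = fun j => (e j : Fin R → ℝ) := by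
        funext j; ext k; simp [submatrix_apply, congrFun (hq j) k]
      rw [this]
      exact hbli.comp (fun j => e j) (fun a c h => e.injective h)
    exact (Matrix.isUnit_iff_isUnit_det _).mp (linearIndependent_rows_iff_isUnit.mp hli)
  obtain ⟨q0, hq0inj, hq0unit⟩ := h1
  have hdetpos : 0 < |A.det| := by
    have h1 := hmax q0 hq0inj
    have h2 : (V.submatrix q0 id).det ≠ 0 := hq0unit.ne_zero
    have : 0 < |(V.submatrix q0 id).det| := abs_pos.mpr h2
    linarith
  have hdet : A.det ≠ 0 := by
    intro h; rw [hA] at h; rw [hA, h] at hdetpos; simp at hdetpos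
  have hunit : IsUnit A.det := isUnit_iff_ne_zero.mpr hdet
  refine ⟨hunit, ?_⟩
  intro i j
  -- key determinant bound
  have hbound : |(A.updateRow j (V i)).det| ≤ |A.det| := by
    set q : Fin R → Fin K := Function.update p j i with hqdef
    have hsub : V.submatrix q id = A.updateRow j (V i) := by
      ext j' k
      by_cases h : j' = j
      · subst h; simp [hqdef, Function.update_self, updateRow_self]
      · simp [hqdef, Function.update_of_ne h, updateRow_ne h, hA]
    by_cases hqi : Function.Injective q
    · have := hmax q hqi
      rwa [hsub] at this
    · -- q not injective: p j' = i for some j' ≠ j, so the updated matrix has equal rows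
      have : ∃ j', j' ≠ j ∧ p j' = i := by
        simp only [Function.not_injective_iff] at hqi
        obtain ⟨a, c, hac, hne⟩ := hqi
        by_cases ha : a = j
        · subst ha
          refine ⟨c, fun h => hne h.symm, ?_⟩
          rw [hqdef] at hac
          simp [Function.update_self, Function.update_of_ne (fun h => hne h.symm)] at hac
          exact hac.symm
        · by_cases hc : c = j
          · subst hc
            refine ⟨a, ha, ?_⟩
            rw [hqdef] at hac
            simp [Function.update_self, Function.update_of_ne ha] at hac
            exact hac
          · exfalso
            rw [hqdef] at hac
            simp [Function.update_of_ne ha, Function.update_of_ne hc] at hac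
            exact hne (hp hac)
      obtain ⟨j', hj'ne, hj'⟩ := this
      have hzero : (A.updateRow j (V i)).det = 0 := by
        apply det_zero_of_row_eq hj'ne
        rw [updateRow_ne hj'ne, updateRow_self]
        funext k
        simp [hA, submatrix_apply, hj']
      rw [hzero]
      simp
  -- express the entry via the updated determinant
  have hentry : (V * A⁻¹) i j = (A.det)⁻¹ * (A.updateRow j (V i)).det := by
    rw [← cramer_transpose_apply, cramer_eq_adjugate_mulVec]
    rw [Matrix.inv_def, Ring.inverse_eq_inv]
    simp only [mul_apply, mulVec, dotProduct, Matrix.smul_apply, smul_eq_mul, adjugate_transpose]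
    rw [Finset.mul_sum]
    apply Finset.sum_congr rfl
    intro k _
    rw [← adjugate_transpose, transpose_apply]
    ring
  rw [hentry, abs_mul, abs_inv]
  rw [inv_mul_le_iff₀ hdetpos, mul_one]
  exact hbound
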